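/- arXiv:2303.06764 — 4 statements merged into one kernel-verified Lean document; each statement's English description precedes it below -/
import Mathlib

section
/- Let m, n, r be nonnegative integers with 0 ≤ r < m. Then a_{r,m}(n) = Σ_{j=0}^∞ (mj + r)·p(n − mj − r), where the sum has finitely many nonzero terms since p vanishes on negative arguments. -/
noncomputable section

/-- `partitionCount n` is the number of partitions of `n`. -/
def partitionCount (n : ℕ) : ℕ := Nat.card (Nat.Partition n)

/-- `p` extended to `ℤ`, vanishing on negative arguments. -/
def pZ (x : ℤ) : ℤ := if 0 ≤ x then partitionCount x.toNat else 0

/-- `a r m n` is the sum of all different parts congruent to `r` mod `m`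
in all partitions of `n` (each distinct part value counted once per partition). -/
def a (r m n : ℕ) : ℕ :=
  ∑ l : Nat.Partition n, ∑ d ∈ l.parts.toFinset, if d % m = r then d else 0

/-- `a r m` extended to `ℤ`, vanishing on negative arguments. -/
def aZ (r m : ℕ) (x : ℤ) : ℤ := if 0 ≤ x then a r m x.toNat else 0

/-- `s m n` is the sum of different parts appearing at least `m` times
in all partitions of `n` (each such distinct part value counted once per partition). -/
def s (m n : ℕ) : ℕ :=
  ∑ l : Nat.Partition n, ∑ d ∈ l.parts.toFinset, if m ≤ l.parts.count d then d else 0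

/-- `s m` extended to `ℤ`, vanishing on negative arguments. -/
def sZ (m : ℕ) (x : ℤ) : ℤ := if 0 ≤ x then s m x.toNat else 0

/-- `peo n = p_e(n) - p_o(n)`: partitions with an even number of parts minus
partitions with an odd number of parts. -/
def peo (n : ℕ) : ℤ :=
  (Nat.card {l : Nat.Partition n // Even (Multiset.card l.parts)} : ℤ) -
    (Nat.card {l : Nat.Partition n // Odd (Multiset.card l.parts)} : ℤ)

/-- `peo` extended to `ℤ`, vanishing on negative arguments. -/
def peoZ (x : ℤ) : ℤ := if 0 ≤ x then peo x.toNat else 0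

/-- Number of partitions of `n` into distinct parts, all odd. -/
def qodd (n : ℕ) : ℕ :=
  Nat.card {l : Nat.Partition n // l.parts.Nodup ∧ ∀ d ∈ l.parts, Odd d}

/-- `qodd` extended to `ℤ`, vanishing on negative arguments. -/
def qoddZ (x : ℤ) : ℤ := if 0 ≤ x then qodd x.toNat else 0

/-- Number of partitions of `n` into distinct parts. -/
def q (n : ℕ) : ℕ := Nat.card {l : Nat.Partition n // l.parts.Nodup}

/-- `q(x/2)`, set to `0` whenever `x/2` is not a nonnegative integer. -/
def qHalfZ (x : ℤ) : ℤ := if 0 ≤ x ∧ 2 ∣ x then q (x.toNat / 2) else 0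

/-- The rank of a partition: its largest part minus its number of parts
(the empty partition has rank 0). -/
def rank {n : ℕ} (l : Nat.Partition n) : ℤ :=
  (l.parts.sup : ℤ) - Multiset.card l.parts

/-- Number of partitions of `n` with nonnegative rank. -/
def N (n : ℕ) : ℕ := Nat.card {l : Nat.Partition n // 0 ≤ rank l}

/-- `N` extended to `ℤ`, vanishing on negative arguments. -/
def NZ (x : ℤ) : ℤ := if 0 ≤ x then N x.toNat else 0

/-- Number of partitions of `n` with positive rank. -/
def R (n : ℕ) : ℕ := Nat.card {l : Nat.Partition n // 0 < rank l}

/-- `R` extended to `ℤ`, vanishing on negative arguments. -/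
def RZ (x : ℤ) : ℤ := if 0 ≤ x then R x.toNat else 0

/-- Number of Garden of Eden partitions of `n`, i.e. partitions of rank at most `-2`. -/
def G (n : ℕ) : ℕ := Nat.card {l : Nat.Partition n // rank l ≤ -2}

/-- `G` extended to `ℤ`, vanishing on negative arguments. -/
def GZ (x : ℤ) : ℤ := if 0 ≤ x then G x.toNat else 0

/-- The crank of a partition: the largest part if no part equals 1, and otherwise
the number of parts larger than the multiplicity of 1 minus that multiplicity. -/
def crank {n : ℕ} (l : Nat.Partition n) : ℤ :=
  if Multiset.count 1 l.parts = 0 then (l.parts.sup : ℤ)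
  else (Multiset.card (Multiset.filter (fun d => Multiset.count 1 l.parts < d) l.parts) : ℤ)
    - Multiset.count 1 l.parts

/-- Number of partitions of `n` with nonnegative crank. -/
def C (n : ℕ) : ℕ := Nat.card {l : Nat.Partition n // 0 ≤ crank l}

/-- `C` extended to `ℤ`, vanishing on negative arguments. -/
def CZ (x : ℤ) : ℤ := if 0 ≤ x then C x.toNat else 0

/-- Number of partitions of `n` with positive crank. -/
def D (n : ℕ) : ℕ := Nat.card {l : Nat.Partition n // 0 < crank l}

/-- `D` extended to `ℤ`, vanishing on negative arguments. -/
def DZ (x : ℤ) : ℤ := if 0 ≤ x then D x.toNat else 0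

/-- The minimal excludant of a partition: the least positive integer that is not a part. -/
def mex {n : ℕ} (l : Nat.Partition n) : ℕ := sInf {k : ℕ | 0 < k ∧ k ∉ l.parts}

lemma part_le_sum {n : ℕ} (l : Nat.Partition n) {d : ℕ} (hd : d ∈ l.parts) : d ≤ n := by
  conv_rhs => rw [← l.parts_sum]
  exact Multiset.single_le_sum (fun x _ => Nat.zero_le x) d hd

/-- Removing a part `d` gives an equivalence with partitions of `n - d`. -/
def partitionMemEquiv (n d : ℕ) (hd : 0 < d) (hdn : d ≤ n) :
    {l : Nat.Partition n // d ∈ l.parts} ≃ Nat.Partition (n - d) where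
  toFun l := ⟨l.1.parts.erase d,
      (by intro i hi; exact l.1.parts_pos (Multiset.mem_of_mem_erase hi)), by
        have h := l.1.parts_sum
        have hc := congrArg Multiset.sum (Multiset.cons_erase l.2)
        rw [Multiset.sum_cons, h] at hc
        omega⟩
  invFun p := ⟨⟨d ::ₘ p.parts, by
      intro i hi
      rcases Multiset.mem_cons.mp hi with h | h
      · omega
      · exact p.parts_pos h, by
      rw [Multiset.sum_cons, p.parts_sum]; omega⟩, Multiset.mem_cons_self _ _⟩
  left_inv l := by
    apply Subtype.ext
    ext1
    simp [Multiset.cons_erase l.2]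
  right_inv p := by
    ext1
    simp

lemma card_mem_eq (n d : ℕ) (hd : 0 < d) (hdn : d ≤ n) :
    Nat.card {l : Nat.Partition n // d ∈ l.parts} = partitionCount (n - d) := by
  rw [partitionCount]
  exact Nat.card_congr (partitionMemEquiv n d hd hdn)

lemma a_eq_finsum (m n r : ℕ) :
    a r m n = ∑ d ∈ (Finset.range (n + 1)).filter (fun d => d % m = r),
      d * partitionCount (n - d) := by
  have step1 : ∀ l : Nat.Partition n,
      (∑ d ∈ l.parts.toFinset, if d % m = r then d else 0) =
      ∑ d ∈ Finset.range (n + 1),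
        if d ∈ l.parts.toFinset then (if d % m = r then d else 0) else 0 := by
    intro l
    rw [Finset.sum_ite_mem]
    congr 1
    refine (Finset.inter_eq_right.mpr ?_).symm
    intro d hd
    rw [Finset.mem_range]
    have := part_le_sum l (Multiset.mem_toFinset.mp hd)
    omega
  rw [a]
  simp_rw [step1]
  rw [Finset.sum_comm]
  have step2 : ∀ d ∈ Finset.range (n + 1),
      (∑ l : Nat.Partition n,
        if d ∈ l.parts.toFinset then (if d % m = r then d else 0) else 0) =
      (if d % m = r then d else 0) * partitionCount (n - d) := by
    intro d hd
    have hcard : (∑ l : Nat.Partition n,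
        if d ∈ l.parts.toFinset then (if d % m = r then d else 0) else 0) =
        (if d % m = r then d else 0) *
          (Finset.univ.filter (fun l : Nat.Partition n => d ∈ l.parts.toFinset)).card := by
      rw [← Finset.sum_filter, Finset.sum_const, smul_eq_mul, Nat.mul_comm]
    rw [hcard]
    by_cases hd0 : d = 0
    · subst hd0
      rw [ite_self, zero_mul, zero_mul]
    · congr 1
      have hle : d ≤ n := by rw [Finset.mem_range] at hd; omega
      have := card_mem_eq n d (Nat.pos_of_ne_zero hd0) hle
      rw [← this, Nat.card_eq_fintype_card, Fintype.card_subtype]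
      congr 1
      ext l
      simp [Multiset.mem_toFinset]
  rw [Finset.sum_congr rfl step2, Finset.sum_filter]
  apply Finset.sum_congr rfl
  intro d _
  by_cases hr : d % m = r <;> simp [hr]

/-- Merca, Theorem 1.3(i): `a_{r,m}(n) = Σ_{j≥0} (mj+r)·p(n-mj-r)`. -/
theorem a_eq_sum (m n r : ℕ) (h : r < m) :
    (a r m n : ℤ) =
      ∑' j : ℕ, ((m * j + r : ℕ) : ℤ) * pZ ((n : ℤ) - (m * j + r : ℕ)) := by
  have hm : 1 ≤ m := by omega
  have hzero : ∀ j : ℕ, n < m * j + r →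
      ((m * j + r : ℕ) : ℤ) * pZ ((n : ℤ) - (m * j + r : ℕ)) = 0 := by
    intro j hj
    have hneg : ((n : ℤ) - (m * j + r : ℕ)) < 0 := by push_cast; omega
    rw [pZ, if_neg (by omega), mul_zero]
  rw [tsum_eq_sum (s := Finset.range (n + 1)) (by
    intro j hj
    rw [Finset.mem_range] at hj
    exact hzero j (by nlinarith))]
  rw [← Finset.sum_filter_of_ne (p := fun j => m * j + r ≤ n) (by
    intro j _ hne
    by_contra hc
    exact hne (hzero j (by omega)))]
  rw [a_eq_finsum m n r]
  push_cast
  refine Finset.sum_nbij' (fun d => d / m) (fun j => m * j + r) ?_ ?_ ?_ ?_ ?_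
  · intro d hd
    simp only [Finset.mem_filter, Finset.mem_range] at hd ⊢
    have h1 := Nat.div_add_mod d m
    have h2 := Nat.div_le_self d m
    exact ⟨by omega, by omega⟩
  · intro j hj
    simp only [Finset.mem_filter, Finset.mem_range] at hj ⊢
    exact ⟨by omega, by rw [Nat.mul_add_mod, Nat.mod_eq_of_lt h]⟩
  · intro d hd
    simp only [Finset.mem_filter, Finset.mem_range] at hd
    have h1 := Nat.div_add_mod d m
    omega
  · intro j hj
    rw [Nat.mul_add_div (by omega), Nat.div_eq_of_lt h]
    omega
  · intro d hd
    simp only [Finset.mem_filter, Finset.mem_range] at hd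
    have hdm : m * (d / m) + r = d := by
      have h1 := Nat.div_add_mod d m
      omega
    have hdmz : (m : ℤ) * ((fun d => d / m) d : ℕ) + (r : ℤ) = (d : ℤ) := by
      simp only
      exact_mod_cast congrArg (Nat.cast : ℕ → ℤ) hdm
    rw [hdmz]
    congr 1
    have hle : (0 : ℤ) ≤ (n : ℤ) - d := by push_cast; omega
    rw [pZ, if_pos hle]
    have ht : ((n : ℤ) - d).toNat = n - d := by omega
    rw [ht]
end
end

section
/- Let m, n, r be nonnegative integers with 0 ≤ r < m. Then Σ_{j=0}^∞ (−1)^j · a_{r,m}(n − j(3j+1)/2) = Σ_{j=0}^∞ (mj + r)·N(n − mj − r). -/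
noncomputable section

open Multiset

lemma msup_mem {s : Multiset ℕ} (h : s ≠ 0) : s.sup ∈ s := by
  induction s using Multiset.induction with
  | empty => simp at h
  | cons a t ih =>
    rw [Multiset.sup_cons]
    rcases eq_or_ne t 0 with rfl | ht
    · simp
    · rcases le_total a t.sup with h1 | h1
      · rw [sup_eq_right.mpr h1]; exact Multiset.mem_cons_of_mem (ih ht)
      · rw [sup_eq_left.mpr h1]; exact Multiset.mem_cons_self a t

lemma sum_filter_pos (s : Multiset ℕ) : (s.filter (fun x => 0 < x)).sum = s.sum := by
  conv_rhs => rw [← Multiset.filter_add_not (fun x => 0 < x) s]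
  rw [Multiset.sum_add]
  have h0 : (s.filter (fun x => ¬ 0 < x)).sum = 0 := by
    rw [Multiset.sum_eq_zero]
    intro x hx
    have := Multiset.of_mem_filter hx
    omega
  rw [h0, add_zero]

lemma sum_map_pred {s : Multiset ℕ} (h : ∀ x ∈ s, 0 < x) :
    (s.map (fun x => x - 1)).sum + Multiset.card s = s.sum := by
  induction s using Multiset.induction with
  | empty => simp
  | cons a t ih =>
    simp only [Multiset.map_cons, Multiset.sum_cons, Multiset.card_cons]
    have ha := h a (Multiset.mem_cons_self a t)
    have ht := ih (fun x hx => h x (Multiset.mem_cons_of_mem hx))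
    omega

lemma sum_map_succ (s : Multiset ℕ) :
    (s.map (fun x => x + 1)).sum = s.sum + Multiset.card s := by
  induction s using Multiset.induction with
  | empty => simp
  | cons a t ih =>
    simp only [Multiset.map_cons, Multiset.sum_cons, Multiset.card_cons, ih]
    ring

lemma card_le_sum {s : Multiset ℕ} (h : ∀ x ∈ s, 0 < x) : Multiset.card s ≤ s.sum := by
  have := sum_map_pred h
  omega

-- decomposition of a positive multiset into parts ≥ 2 and ones
lemma pos_decomp {s : Multiset ℕ} (h : ∀ x ∈ s, 0 < x) :
    s.filter (fun x => 2 ≤ x) + Multiset.replicate (Multiset.count 1 s) 1 = s := by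
  conv_rhs => rw [← Multiset.filter_add_not (fun x => 2 ≤ x) s]
  congr 1
  have : s.filter (fun x => ¬ 2 ≤ x) = s.filter (· = 1) := by
    apply Multiset.filter_congr
    intro x hx
    have := h x hx
    constructor <;> intro <;> omega
  rw [this, Multiset.filter_eq']

lemma F_eq {s : Multiset ℕ} :
    (s.map (fun x => x - 1)).filter (fun x => 0 < x)
      = (s.filter (fun x => 2 ≤ x)).map (fun x => x - 1) := by
  rw [Multiset.filter_map]
  congr 1
  apply Multiset.filter_congr
  intro x _
  simp only [Function.comp]
  constructor <;> intro <;> omega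

lemma F_map_succ {s : Multiset ℕ} :
    ((s.filter (fun x => 2 ≤ x)).map (fun x => x - 1)).map (fun x => x + 1)
      = s.filter (fun x => 2 ≤ x) := by
  rw [Multiset.map_map]
  have h : ∀ x ∈ s.filter (fun x => 2 ≤ x),
      ((fun x => x + 1) ∘ (fun x => x - 1)) x = (fun x => x) x := by
    intro x hx
    have := Multiset.of_mem_filter hx
    simp only [Function.comp_apply]
    omega
  rw [Multiset.map_congr rfl h, Multiset.map_id']

def dysonParts (k : ℕ) (L : Multiset ℕ) : Multiset ℕ :=
  ((Multiset.card L - (k + 2)) ::ₘ L.map (fun x => x - 1)).filter (fun x => 0 < x)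

def dysonInvParts (k : ℕ) (M : Multiset ℕ) : Multiset ℕ :=
  (M.erase M.sup).map (fun x => x + 1) +
    Multiset.replicate (M.sup + k + 2 - Multiset.card (M.erase M.sup)) 1

section Dyson

variable {k : ℕ} {L M : Multiset ℕ}

lemma dysonParts_pos (x : ℕ) (hx : x ∈ dysonParts k L) : 0 < x :=
  Multiset.of_mem_filter hx

lemma hrank_ne (hrank : L.sup + k + 1 ≤ Multiset.card L) : L ≠ 0 := by
  intro h
  subst h
  simp at hrank

lemma dysonParts_sum (hpos : ∀ x ∈ L, 0 < x) (hrank : L.sup + k + 1 ≤ Multiset.card L) :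
    (dysonParts k L).sum = L.sum - (k + 2) := by
  have hne := hrank_ne hrank
  have hS1 : 1 ≤ L.sup := by
    obtain ⟨x, hx⟩ := Multiset.exists_mem_of_ne_zero hne
    exact le_trans (hpos x hx) (Multiset.le_sup hx)
  rw [dysonParts, sum_filter_pos, Multiset.sum_cons]
  have h1 := sum_map_pred hpos
  have h2 := card_le_sum hpos
  omega

lemma dysonParts_rank (hpos : ∀ x ∈ L, 0 < x) (hrank : L.sup + k + 1 ≤ Multiset.card L) :
    -(k + 3 : ℤ) ≤ ((dysonParts k L).sup : ℤ) - Multiset.card (dysonParts k L) := by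
  have hne := hrank_ne hrank
  have hS1 : 1 ≤ L.sup := by
    obtain ⟨x, hx⟩ := Multiset.exists_mem_of_ne_zero hne
    exact le_trans (hpos x hx) (Multiset.le_sup hx)
  rcases Nat.eq_zero_or_pos (Multiset.card L - (k + 2)) with hc | hc
  · have hP : dysonParts k L = 0 := by
      rw [dysonParts, Multiset.filter_eq_nil]
      intro x hx
      rcases Multiset.mem_cons.mp hx with rfl | hx'
      · omega
      · obtain ⟨y, hy, rfl⟩ := Multiset.mem_map.mp hx'
        have := Multiset.le_sup hy
        omega
    rw [hP]
    simp
  · have hmem : Multiset.card L - (k + 2) ∈ dysonParts k L :=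
      Multiset.mem_filter.mpr ⟨Multiset.mem_cons_self _ _, hc⟩
    have hsup : Multiset.card L - (k + 2) ≤ (dysonParts k L).sup := Multiset.le_sup hmem
    have hcard : Multiset.card (dysonParts k L)
        ≤ Multiset.card L + 1 := by
      have := Multiset.card_le_card (Multiset.filter_le (fun x => 0 < x)
        ((Multiset.card L - (k + 2)) ::ₘ L.map (fun x => x - 1)))
      simpa [dysonParts] using this
    push_cast
    omega

lemma dysonInv_card_erase (hrank : Multiset.card M ≤ M.sup + k + 3) :
    Multiset.card (M.erase M.sup) ≤ M.sup + k + 2 := by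
  rcases eq_or_ne M 0 with rfl | hne
  · simp
  · rw [Multiset.card_erase_of_mem (msup_mem hne), Nat.pred_eq_sub_one]
    omega

lemma dysonInvParts_pos (hrank : Multiset.card M ≤ M.sup + k + 3) (x : ℕ)
    (hx : x ∈ dysonInvParts k M) : 0 < x := by
  rw [dysonInvParts, Multiset.mem_add] at hx
  rcases hx with hx | hx
  · obtain ⟨y, _, rfl⟩ := Multiset.mem_map.mp hx
    omega
  · rw [Multiset.eq_of_mem_replicate hx]
    omega

lemma dysonInvParts_sum (hpos : ∀ x ∈ M, 0 < x) (hrank : Multiset.card M ≤ M.sup + k + 3) :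
    (dysonInvParts k M).sum = M.sum + (k + 2) := by
  have hce := dysonInv_card_erase hrank
  rw [dysonInvParts, Multiset.sum_add, sum_map_succ, Multiset.sum_replicate, smul_eq_mul,
    mul_one]
  rcases eq_or_ne M 0 with rfl | hne
  · simp
  · have hmem := msup_mem hne
    have hsum : M.sup + (M.erase M.sup).sum = M.sum := by
      conv_rhs => rw [← Multiset.cons_erase hmem]
      rw [Multiset.sum_cons]
    omega

lemma dysonInvParts_card (hrank : Multiset.card M ≤ M.sup + k + 3) :
    Multiset.card (dysonInvParts k M) = M.sup + k + 2 := by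
  have hce := dysonInv_card_erase hrank
  rw [dysonInvParts, Multiset.card_add, Multiset.card_map, Multiset.card_replicate]
  omega

lemma dysonInvParts_rank (hpos : ∀ x ∈ M, 0 < x) (hrank : Multiset.card M ≤ M.sup + k + 3) :
    ((dysonInvParts k M).sup : ℤ) - Multiset.card (dysonInvParts k M) ≤ -(k + 1 : ℤ) := by
  have hcard := dysonInvParts_card (k := k) hrank
  have hsup : (dysonInvParts k M).sup ≤ M.sup + 1 := by
    rw [Multiset.sup_le]
    intro b hb
    rw [dysonInvParts, Multiset.mem_add] at hb
    rcases hb with hb | hb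
    · obtain ⟨y, hy, rfl⟩ := Multiset.mem_map.mp hb
      have := Multiset.le_sup (Multiset.mem_of_mem_erase hy)
      omega
    · rw [Multiset.eq_of_mem_replicate hb]
      omega
  rw [hcard]
  push_cast
  omega

lemma dyson_left_inv (hpos : ∀ x ∈ L, 0 < x) (hrank : L.sup + k + 1 ≤ Multiset.card L) :
    dysonInvParts k (dysonParts k L) = L := by
  have hne := hrank_ne hrank
  have hS1 : 1 ≤ L.sup := by
    obtain ⟨x, hx⟩ := Multiset.exists_mem_of_ne_zero hne
    exact le_trans (hpos x hx) (Multiset.le_sup hx)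
  rcases Nat.eq_zero_or_pos (Multiset.card L - (k + 2)) with hc | hc
  · -- L is (k+2) copies of 1
    have hcard : Multiset.card L = k + 2 := by omega
    have hsupL : L.sup = 1 := by omega
    have hL : L = Multiset.replicate (k + 2) 1 := by
      rw [Multiset.eq_replicate]
      refine ⟨hcard, fun b hb => ?_⟩
      have h1 := hpos b hb
      have h2 := Multiset.le_sup hb
      omega
    have hP : dysonParts k L = 0 := by
      rw [dysonParts, Multiset.filter_eq_nil]
      intro x hx
      rcases Multiset.mem_cons.mp hx with rfl | hx'
      · omega
      · obtain ⟨y, hy, rfl⟩ := Multiset.mem_map.mp hx'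
        have := Multiset.le_sup hy
        omega
    rw [hP, dysonInvParts]
    simp [hL]
  · -- main case
    have hP : dysonParts k L
        = (Multiset.card L - (k + 2)) ::ₘ (L.map (fun x => x - 1)).filter (fun x => 0 < x) := by
      have hc' : (fun x => 0 < x) (Multiset.card L - (k + 2)) := hc
      rw [dysonParts, Multiset.filter_cons_of_pos _ hc']
    have hFeq : (L.map (fun x => x - 1)).filter (fun x => 0 < x)
        = (L.filter (fun x => 2 ≤ x)).map (fun x => x - 1) := F_eq
    have hsupP : (dysonParts k L).sup = Multiset.card L - (k + 2) := by
      apply le_antisymm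
      · rw [Multiset.sup_le]
        intro b hb
        rw [hP] at hb
        rcases Multiset.mem_cons.mp hb with rfl | hb'
        · omega
        · rw [hFeq] at hb'
          obtain ⟨y, hy, rfl⟩ := Multiset.mem_map.mp hb'
          have := Multiset.le_sup (Multiset.mem_of_mem_filter hy)
          omega
      · exact Multiset.le_sup (by rw [hP]; exact Multiset.mem_cons_self _ _)
    rw [dysonInvParts, hsupP, hP, Multiset.erase_cons_head, hFeq, F_map_succ]
    have hcardF : Multiset.card ((L.filter (fun x => 2 ≤ x)).map (fun x => x - 1))
        = Multiset.card (L.filter (fun x => 2 ≤ x)) := Multiset.card_map _ _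
    have hdecomp := pos_decomp hpos
    have hcount : Multiset.card (L.filter (fun x => 2 ≤ x)) + Multiset.count 1 L
        = Multiset.card L := by
      have := congrArg Multiset.card hdecomp
      simpa using this
    have hrep : Multiset.card L - (k + 2) + k + 2
        - Multiset.card ((L.filter (fun x => 2 ≤ x)).map (fun x => x - 1))
        = Multiset.count 1 L := by
      rw [hcardF]
      have hcf := Multiset.card_le_card (Multiset.filter_le (fun x => 2 ≤ x) L)
      omega
    rw [hrep, hdecomp]

lemma dyson_right_inv (hpos : ∀ x ∈ M, 0 < x) (hrank : Multiset.card M ≤ M.sup + k + 3) :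
    dysonParts k (dysonInvParts k M) = M := by
  have hce := dysonInv_card_erase (k := k) hrank
  have hcard := dysonInvParts_card (k := k) hrank
  have hmappred : (dysonInvParts k M).map (fun x => x - 1)
      = M.erase M.sup + Multiset.replicate (M.sup + k + 2 - Multiset.card (M.erase M.sup)) 0 := by
    rw [dysonInvParts, Multiset.map_add, Multiset.map_map, Multiset.map_replicate]
    congr 1
    · have h : ∀ x ∈ M.erase M.sup, ((fun x => x - 1) ∘ (fun x => x + 1)) x = (fun x => x) x := by
        intro x _
        simp
      rw [Multiset.map_congr rfl h, Multiset.map_id']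
  rw [dysonParts, hcard, hmappred]
  have hc : M.sup + k + 2 - (k + 2) = M.sup := by omega
  rw [hc, Multiset.filter_cons, Multiset.filter_add]
  have he : (M.erase M.sup).filter (fun x => 0 < x) = M.erase M.sup :=
    Multiset.filter_eq_self.mpr (fun x hx => hpos x (Multiset.mem_of_mem_erase hx))
  have hz : (Multiset.replicate (M.sup + k + 2 - Multiset.card (M.erase M.sup)) 0).filter
      (fun x => 0 < x) = 0 :=
    Multiset.filter_eq_nil.mpr (fun x hx => by rw [Multiset.eq_of_mem_replicate hx]; omega)
  rw [he, hz, add_zero]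
  rcases Nat.eq_zero_or_pos M.sup with hs | hs
  · have hM : M = 0 := by
      by_contra hne
      have := hpos _ (msup_mem hne)
      omega
    rw [hM] at hs ⊢
    simp [hs]
  · rw [if_pos hs]
    have hne : M ≠ 0 := by
      intro h
      rw [h] at hs
      simp at hs
    simp only [Multiset.singleton_add]
    exact Multiset.cons_erase (msup_mem hne)

end Dyson


lemma rank_le_nat {n k : ℕ} (l : Nat.Partition n) (h : rank l ≤ -(k + 1 : ℤ)) :
    l.parts.sup + k + 1 ≤ Multiset.card l.parts := by
  rw [rank] at h
  omega

lemma rank_ge_nat {n k : ℕ} (l : Nat.Partition n) (h : -(k + 3 : ℤ) ≤ rank l) :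
    Multiset.card l.parts ≤ l.parts.sup + k + 3 := by
  rw [rank] at h
  omega

def dysonEquiv (k m : ℕ) :
    {l : Nat.Partition (m + (k + 2)) // rank l ≤ -(k + 1 : ℤ)} ≃
    {l : Nat.Partition m // -(k + 3 : ℤ) ≤ rank l} where
  toFun l := ⟨⟨dysonParts k l.1.parts, fun {x} hx => dysonParts_pos x hx, by
      rw [dysonParts_sum (fun x hx => l.1.parts_pos hx) (rank_le_nat l.1 l.2), l.1.parts_sum]
      omega⟩, by
    have := dysonParts_rank (fun x hx => l.1.parts_pos hx) (rank_le_nat l.1 l.2)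
    rw [rank]
    exact this⟩
  invFun l := ⟨⟨dysonInvParts k l.1.parts,
      fun {x} hx => dysonInvParts_pos (rank_ge_nat l.1 l.2) x hx, by
      rw [dysonInvParts_sum (fun x hx => l.1.parts_pos hx) (rank_ge_nat l.1 l.2),
        l.1.parts_sum]⟩, by
    have := dysonInvParts_rank (fun x hx => l.1.parts_pos hx) (rank_ge_nat l.1 l.2)
    rw [rank]
    exact this⟩
  left_inv l := by
    apply Subtype.ext
    apply Nat.Partition.ext
    exact dyson_left_inv (fun x hx => l.1.parts_pos hx) (rank_le_nat l.1 l.2)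
  right_inv l := by
    apply Subtype.ext
    apply Nat.Partition.ext
    exact dyson_right_inv (fun x hx => l.1.parts_pos hx) (rank_ge_nat l.1 l.2)

def Mk (k n : ℕ) : ℕ := Nat.card {l : Nat.Partition n // -(k : ℤ) ≤ rank l}

lemma Mk_split (k n : ℕ) :
    Mk k n + Nat.card {l : Nat.Partition n // rank l ≤ -(k + 1 : ℤ)} = partitionCount n := by
  classical
  have e : {l : Nat.Partition n // rank l ≤ -(k + 1 : ℤ)}
      ≃ {l : Nat.Partition n // ¬(-(k : ℤ) ≤ rank l)} :=
    Equiv.subtypeEquivRight (fun l => by omega)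
  rw [Mk, partitionCount, Nat.card_congr e, Nat.card_eq_fintype_card, Nat.card_eq_fintype_card,
    Nat.card_eq_fintype_card, Fintype.card_subtype_compl]
  have := Fintype.card_subtype_le (fun l : Nat.Partition n => -(k : ℤ) ≤ rank l)
  omega

lemma rank_ge_all {n k : ℕ} (h : n < k + 2) (l : Nat.Partition n) : -(k : ℤ) ≤ rank l := by
  rcases eq_or_ne l.parts 0 with h0 | h0
  · rw [rank, h0]
    simp
  · have hsum := l.parts_sum
    have hcard := card_le_sum (fun x hx => l.parts_pos hx)
    have hS1 : 1 ≤ l.parts.sup := by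
      obtain ⟨x, hx⟩ := Multiset.exists_mem_of_ne_zero h0
      exact le_trans (l.parts_pos hx) (Multiset.le_sup hx)
    rw [rank]
    omega

lemma Mk_all (k n : ℕ) (h : n < k + 2) : Mk k n = partitionCount n := by
  rw [Mk, partitionCount]
  exact Nat.card_congr (Equiv.subtypeUnivEquiv (rank_ge_all h))

lemma Mk_rec (k m : ℕ) :
    Mk k (m + (k + 2)) + Mk (k + 3) m = partitionCount (m + (k + 2)) := by
  have h1 := Mk_split k (m + (k + 2))
  rw [Nat.card_congr (dysonEquiv k m)] at h1
  have e2 : {l : Nat.Partition m // -(k + 3 : ℤ) ≤ rank l}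
      ≃ {l : Nat.Partition m // -((k + 3 : ℕ) : ℤ) ≤ rank l} :=
    Equiv.subtypeEquivRight (fun l => by push_cast; exact Iff.rfl)
  rw [Nat.card_congr e2] at h1
  exact h1

lemma pZ_neg {x : ℤ} (h : x < 0) : pZ x = 0 := if_neg (by omega)

lemma pZ_nat (n : ℕ) : pZ (n : ℤ) = partitionCount n := by
  rw [pZ, if_pos (by positivity)]
  simp

def pent (k j : ℕ) : ℕ := j * (3 * j + 2 * k + 1) / 2

lemma pent_zero (k : ℕ) : pent k 0 = 0 := by simp [pent]

lemma pent_succ (k j : ℕ) : pent k (j + 1) = (k + 2) + pent (k + 3) j := by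
  have h1 : (j + 1) * (3 * (j + 1) + 2 * k + 1) = j * (3 * j + 2 * (k + 3) + 1) + (k + 2) * 2 := by
    ring
  rw [pent, pent, h1, Nat.add_mul_div_right _ _ (by norm_num : (0:ℕ) < 2)]
  omega

lemma pent_ge (k j : ℕ) : j ≤ pent k j := by
  rcases j with _ | j
  · simp [pent]
  · rw [pent, Nat.le_div_iff_mul_le (by norm_num : (0:ℕ) < 2)]
    have h2 : 2 ≤ 3 * (j + 1) + 2 * k + 1 := by omega
    calc (j + 1) * 2 ≤ (j + 1) * (3 * (j + 1) + 2 * k + 1) := Nat.mul_le_mul_left _ h2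
    _ = _ := rfl

lemma Mk_sum (n : ℕ) : ∀ k : ℕ,
    (Mk k n : ℤ) = ∑ j ∈ Finset.range (n + 1), (-1 : ℤ) ^ j * pZ ((n : ℤ) - (pent k j : ℕ)) := by
  induction n using Nat.strong_induction_on with
  | _ n ih =>
  intro k
  rw [Finset.sum_range_succ']
  have h00 : (-1 : ℤ) ^ 0 * pZ ((n : ℤ) - (pent k 0 : ℕ)) = partitionCount n := by
    rw [pent_zero]
    simp [pZ_nat]
  rw [h00]
  by_cases hn : n < k + 2
  · have hz : ∀ j ∈ Finset.range n, (-1 : ℤ) ^ (j + 1) * pZ ((n : ℤ) - (pent k (j + 1) : ℕ)) = 0 := by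
      intro j _
      have harg : (n : ℤ) - (pent k (j + 1) : ℕ) < 0 := by
        rw [pent_succ]
        push_cast
        omega
      rw [pZ_neg harg, mul_zero]
    rw [Finset.sum_eq_zero hz, zero_add, Mk_all k n hn]
  · obtain ⟨m, rfl⟩ : ∃ m, n = m + (k + 2) := ⟨n - (k + 2), by omega⟩
    have htail : ∀ j ∈ Finset.range (m + (k + 2)),
        (-1 : ℤ) ^ (j + 1) * pZ (((m + (k + 2) : ℕ) : ℤ) - (pent k (j + 1) : ℕ))
          = -((-1 : ℤ) ^ j * pZ ((m : ℤ) - (pent (k + 3) j : ℕ))) := by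
      intro j _
      have harg : ((m + (k + 2) : ℕ) : ℤ) - (pent k (j + 1) : ℕ)
          = (m : ℤ) - (pent (k + 3) j : ℕ) := by
        rw [pent_succ]
        push_cast
        ring
      rw [harg, pow_succ]
      ring
    rw [Finset.sum_congr rfl htail, Finset.sum_neg_distrib]
    have hshrink : ∑ j ∈ Finset.range (m + 1), (-1 : ℤ) ^ j * pZ ((m : ℤ) - (pent (k + 3) j : ℕ))
        = ∑ j ∈ Finset.range (m + (k + 2)), (-1 : ℤ) ^ j * pZ ((m : ℤ) - (pent (k + 3) j : ℕ)) := by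
      apply Finset.sum_subset (Finset.range_subset_range.mpr (by omega))
      intro j _ hj
      rw [Finset.mem_range, not_lt] at hj
      have := pent_ge (k + 3) j
      rw [pZ_neg (by push_cast; omega), mul_zero]
    rw [← hshrink, ← ih m (by omega) (k + 3)]
    have hrec := Mk_rec k m
    have : (Mk k (m + (k + 2)) : ℤ) + (Mk (k + 3) m : ℤ) = (partitionCount (m + (k + 2)) : ℤ) := by
      exact_mod_cast congrArg (Nat.cast : ℕ → ℤ) hrec
    omega

lemma N_eq_Mk0 (n : ℕ) : N n = Mk 0 n := by
  rw [N, Mk]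
  exact Nat.card_congr (Equiv.subtypeEquivRight (fun l => by norm_num))

lemma NZ_sum (n : ℕ) (x : ℤ) (hx : x ≤ n) :
    NZ x = ∑ j ∈ Finset.range (n + 1), (-1 : ℤ) ^ j * pZ (x - (pent 0 j : ℕ)) := by
  rcases lt_or_ge x 0 with hneg | hpos
  · rw [NZ, if_neg (by omega)]
    symm
    apply Finset.sum_eq_zero
    intro j _
    rw [pZ_neg (show x - (pent 0 j : ℕ) < 0 by omega), mul_zero]
  · obtain ⟨n', rfl⟩ : ∃ n' : ℕ, x = (n' : ℤ) := ⟨x.toNat, (Int.toNat_of_nonneg hpos).symm⟩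
    have hn' : n' ≤ n := by exact_mod_cast hx
    rw [NZ, if_pos hpos, Int.toNat_natCast, N_eq_Mk0, Mk_sum n' 0]
    apply Finset.sum_subset (Finset.range_subset_range.mpr (by omega))
    intro j _ hj
    rw [Finset.mem_range, not_lt] at hj
    have := pent_ge 0 j
    rw [pZ_neg (by push_cast; omega), mul_zero]


lemma mem_le_sum {s : Multiset ℕ} {d : ℕ} (h : d ∈ s) : d ≤ s.sum := by
  have := Multiset.cons_erase h
  have h2 : s.sum = d + (s.erase d).sum := by
    conv_lhs => rw [← this]
    rw [Multiset.sum_cons]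
  omega

/-- Partitions of `u + d` containing the part `d` are in bijection with partitions of `u`. -/
def partRemoveEquiv (u d : ℕ) (hd : 0 < d) :
    {l : Nat.Partition (u + d) // d ∈ l.parts} ≃ Nat.Partition u where
  toFun l := ⟨l.1.parts.erase d,
    fun {x} hx => l.1.parts_pos (Multiset.mem_of_mem_erase hx), by
      have h1 := l.1.parts_sum
      have h2 := Multiset.cons_erase l.2
      have h3 : l.1.parts.sum = d + (l.1.parts.erase d).sum := by
        conv_lhs => rw [← h2]
        rw [Multiset.sum_cons]
      omega⟩
  invFun p := ⟨⟨d ::ₘ p.parts, fun {x} hx => by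
      rcases Multiset.mem_cons.mp hx with rfl | hx'
      · exact hd
      · exact p.parts_pos hx', by
      rw [Multiset.sum_cons, p.parts_sum]
      omega⟩, Multiset.mem_cons_self _ _⟩
  left_inv l := by
    apply Subtype.ext
    apply Nat.Partition.ext
    exact Multiset.cons_erase l.2
  right_inv p := by
    apply Nat.Partition.ext
    exact Multiset.erase_cons_head _ _

lemma occur_card (n d : ℕ) (hd : 0 < d) (hdn : d ≤ n) :
    (Finset.univ.filter (fun l : Nat.Partition n => d ∈ l.parts)).card
      = partitionCount (n - d) := by
  obtain ⟨u, rfl⟩ : ∃ u, n = u + d := ⟨n - d, by omega⟩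
  have h1 : (Finset.univ.filter (fun l : Nat.Partition (u + d) => d ∈ l.parts)).card
      = Fintype.card {l : Nat.Partition (u + d) // d ∈ l.parts} := (Fintype.card_subtype _).symm
  rw [h1, partitionCount, show u + d - d = u by omega, ← Nat.card_eq_fintype_card,
    Nat.card_congr (partRemoveEquiv u d hd)]
lemma a_swap (r m n : ℕ) :
    (a r m n : ℤ) = ∑ d ∈ Finset.range (n + 1),
      (if d % m = r then (d : ℤ) else 0)
        * ((Finset.univ.filter (fun l : Nat.Partition n => d ∈ l.parts)).card : ℤ) := by
  rw [a]
  push_cast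
  have key : ∀ l : Nat.Partition n,
      (∑ d ∈ l.parts.toFinset, if d % m = r then (d : ℤ) else 0)
        = ∑ d ∈ Finset.range (n + 1),
            if d ∈ l.parts then (if d % m = r then (d : ℤ) else 0) else 0 := by
    intro l
    have hsub : l.parts.toFinset ⊆ Finset.range (n + 1) := by
      intro d hd
      rw [Multiset.mem_toFinset] at hd
      have h2 := mem_le_sum hd
      rw [l.parts_sum] at h2
      rw [Finset.mem_range]
      omega
    calc (∑ d ∈ l.parts.toFinset, if d % m = r then (d : ℤ) else 0)
        = ∑ d ∈ l.parts.toFinset,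
            (if d ∈ l.parts then (if d % m = r then (d : ℤ) else 0) else 0) :=
          Finset.sum_congr rfl (fun d hd => by rw [if_pos (Multiset.mem_toFinset.mp hd)])
      _ = _ := Finset.sum_subset hsub (fun d _ hd =>
          if_neg (by simpa [Multiset.mem_toFinset] using hd))
  rw [Finset.sum_congr rfl (fun l _ => key l), Finset.sum_comm]
  apply Finset.sum_congr rfl
  intro d _
  rw [Finset.sum_ite, Finset.sum_const, Finset.sum_const_zero, add_zero, nsmul_eq_mul]
  ring

lemma aZ_sum (r m : ℕ) (hr : r < m) (n : ℕ) (x : ℤ) (hx : x ≤ n) :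
    aZ r m x = ∑ i ∈ Finset.range (n + 1), ((m * i + r : ℕ) : ℤ) * pZ (x - (m * i + r : ℕ)) := by
  rcases lt_or_ge x 0 with hneg | hpos
  · rw [aZ, if_neg (by omega)]
    symm
    apply Finset.sum_eq_zero
    intro i _
    rcases Nat.eq_zero_or_pos (m * i + r) with h0 | h0
    · rw [h0]
      simp
    · rw [pZ_neg (show x - ((m * i + r : ℕ) : ℤ) < 0 by omega), mul_zero]
  · obtain ⟨n', rfl⟩ : ∃ n' : ℕ, x = (n' : ℤ) := ⟨x.toNat, (Int.toNat_of_nonneg hpos).symm⟩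
    have hn' : n' ≤ n := by exact_mod_cast hx
    rw [aZ, if_pos hpos, Int.toNat_natCast, a_swap]
    simp only [ite_mul, zero_mul]
    rw [← Finset.sum_filter]
    have hRHS : ∑ i ∈ Finset.range (n + 1), ((m * i + r : ℕ) : ℤ) * pZ ((n' : ℤ) - (m * i + r : ℕ))
        = ∑ i ∈ (Finset.range (n + 1)).filter (fun i => m * i + r ≤ n'),
            ((m * i + r : ℕ) : ℤ) * pZ ((n' : ℤ) - (m * i + r : ℕ)) := by
      symm
      apply Finset.sum_subset (Finset.filter_subset _ _)
      intro i hi hni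
      rw [Finset.mem_filter] at hni
      have h2 : ¬ (m * i + r ≤ n') := fun hc => hni ⟨hi, hc⟩
      rw [pZ_neg (by push_cast; omega), mul_zero]
    rw [hRHS]
    apply Finset.sum_nbij' (fun d => d / m) (fun i => m * i + r)
    · intro d hd
      simp only [Finset.mem_filter, Finset.mem_range] at hd ⊢
      have h1 : m * (d / m) + r = d := by
        conv_rhs => rw [← Nat.div_add_mod d m]
        rw [hd.2]
      constructor
      · have := Nat.div_le_self d m
        omega
      · omega
    · intro i hi
      simp only [Finset.mem_filter, Finset.mem_range] at hi ⊢
      refine ⟨by omega, ?_⟩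
      rw [Nat.mul_add_mod, Nat.mod_eq_of_lt hr]
    · intro d hd
      simp only [Finset.mem_filter, Finset.mem_range] at hd
      conv_rhs => rw [← Nat.div_add_mod d m]
      rw [hd.2]
    · intro i hi
      rw [Nat.mul_add_div (by omega), Nat.div_eq_of_lt hr]
      omega
    · intro d hd
      simp only [Finset.mem_filter, Finset.mem_range] at hd
      have h1 : m * (d / m) + r = d := by
        conv_rhs => rw [← Nat.div_add_mod d m]
        rw [hd.2]
      rw [h1]
      rcases Nat.eq_zero_or_pos d with rfl | hdpos
      · simp
      · rw [occur_card n' d hdpos (by omega)]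
        have h2 : (n' : ℤ) - (d : ℕ) = ((n' - d : ℕ) : ℤ) := by push_cast; omega
        rw [h2, pZ_nat]

/-- Merca, Corollary 5.2(i). -/
theorem a_pentagonal_N (m n r : ℕ) (h : r < m) :
    (∑' j : ℕ, (-1 : ℤ) ^ j * aZ r m ((n : ℤ) - (j * (3 * j + 1) / 2 : ℕ))) =
      ∑' j : ℕ, ((m * j + r : ℕ) : ℤ) * NZ ((n : ℤ) - (m * j + r : ℕ)) := by
  have hpent : ∀ j : ℕ, j * (3 * j + 1) / 2 = pent 0 j := by
    intro j
    simp [pent]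
  simp only [hpent]
  have hL : (∑' j : ℕ, (-1 : ℤ) ^ j * aZ r m ((n : ℤ) - (pent 0 j : ℕ)))
      = ∑ j ∈ Finset.range (n + 1), (-1 : ℤ) ^ j * aZ r m ((n : ℤ) - (pent 0 j : ℕ)) := by
    apply tsum_eq_sum
    intro j hj
    rw [Finset.mem_range, not_lt] at hj
    have h1 := pent_ge 0 j
    rw [aZ, if_neg (by push_cast; omega), mul_zero]
  have hR : (∑' j : ℕ, ((m * j + r : ℕ) : ℤ) * NZ ((n : ℤ) - (m * j + r : ℕ)))
      = ∑ i ∈ Finset.range (n + 1), ((m * i + r : ℕ) : ℤ) * NZ ((n : ℤ) - (m * i + r : ℕ)) := by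
    apply tsum_eq_sum
    intro i hi
    rw [Finset.mem_range, not_lt] at hi
    have h1 : n + 1 ≤ m * i + r := by
      have h2 : 1 * i ≤ m * i := Nat.mul_le_mul_right i (by omega)
      omega
    have h3 : ((n : ℕ) : ℤ) + 1 ≤ ((m * i + r : ℕ) : ℤ) := by exact_mod_cast h1
    have h4 : ((m : ℤ) * i + r) = ((m * i + r : ℕ) : ℤ) := by push_cast; ring
    rw [NZ, if_neg (by omega), mul_zero]
  rw [hL, hR]
  have hexp : ∀ j ∈ Finset.range (n + 1),
      (-1 : ℤ) ^ j * aZ r m ((n : ℤ) - (pent 0 j : ℕ))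
        = ∑ i ∈ Finset.range (n + 1), ((m * i + r : ℕ) : ℤ)
            * ((-1 : ℤ) ^ j * pZ (((n : ℤ) - (m * i + r : ℕ)) - (pent 0 j : ℕ))) := by
    intro j _
    rw [aZ_sum r m h n _ (by push_cast; omega), Finset.mul_sum]
    apply Finset.sum_congr rfl
    intro i _
    have harg : ((n : ℤ) - (pent 0 j : ℕ)) - ((m * i + r : ℕ) : ℤ)
        = ((n : ℤ) - (m * i + r : ℕ)) - (pent 0 j : ℕ) := by ring
    rw [harg]
    ring
  rw [Finset.sum_congr rfl hexp, Finset.sum_comm]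
  apply Finset.sum_congr rfl
  intro i _
  rw [← Finset.mul_sum, ← NZ_sum n _ (by
    have h4 : (0 : ℤ) ≤ ((m * i + r : ℕ) : ℤ) := Int.natCast_nonneg _
    omega)]
end
end

section
/- Let m, n, r be nonnegative integers with 0 ≤ r < m. Then Σ_{j=1}^∞ (−1)^{j+1} · a_{r,m}(n − j(3j+1)/2) = Σ_{j=0}^∞ (mj + r)·R(n − mj − r). -/
noncomputable section

/-! ### Auxiliary lemmas -/

namespace MercaAux

open Finset Multiset

/-- pentagonal numbers -/
def gp (k : ℕ) : ℕ := k * (3 * k + 1) / 2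

lemma two_gp (k : ℕ) : 2 * gp k = k * (3 * k + 1) := by
  have h : 2 ∣ k * (3 * k + 1) := by
    rcases Nat.even_or_odd k with h | h
    · exact Dvd.dvd.mul_right h.two_dvd _
    · have : Even (3 * k + 1) := by
        rcases h with ⟨t, ht⟩; exact ⟨3*t+2, by omega⟩
      exact Dvd.dvd.mul_left this.two_dvd _
  unfold gp; omega

lemma gp_succ (k : ℕ) : gp (k + 1) = gp k + (3 * k + 2) := by
  have h1 := two_gp k; have h2 := two_gp (k+1); nlinarith [h1, h2]

lemma gp_ge (k : ℕ) : 2 * k ≤ gp k := by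
  have := two_gp k; nlinarith

lemma sum_map_pred (t : Multiset ℕ) (h : ∀ x ∈ t, 0 < x) :
    (t.map (· - 1)).sum + Multiset.card t = t.sum := by
  induction t using Multiset.induction with
  | empty => simp
  | cons a s ih =>
      simp only [Multiset.map_cons, Multiset.sum_cons, Multiset.card_cons]
      have ha : 0 < a := h a (Multiset.mem_cons_self a s)
      have := ih (fun x hx => h x (Multiset.mem_cons_of_mem hx))
      omega

lemma card_le_sum (t : Multiset ℕ) (h : ∀ x ∈ t, 0 < x) :
    Multiset.card t ≤ t.sum := by
  induction t using Multiset.induction with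
  | empty => simp
  | cons a s ih =>
      simp only [Multiset.sum_cons, Multiset.card_cons]
      have ha : 0 < a := h a (Multiset.mem_cons_self a s)
      have := ih (fun x hx => h x (Multiset.mem_cons_of_mem hx))
      omega

lemma sup_mem (t : Multiset ℕ) (h : t ≠ 0) : t.sup ∈ t := by
  induction t using Multiset.induction with
  | empty => simp at h
  | cons a s ih =>
      rcases eq_or_ne s 0 with rfl | hs
      · simp
      · have hmem := ih hs
        rw [Multiset.sup_cons]
        rcases le_total a s.sup with hle | hle
        · rw [sup_eq_right.mpr hle]; exact Multiset.mem_cons_of_mem hmem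
        · rw [sup_eq_left.mpr hle]; exact Multiset.mem_cons_self a s

lemma part_le_sum {n : ℕ} (l : Nat.Partition n) {d : ℕ} (hd : d ∈ l.parts) : d ≤ n := by
  have := Multiset.single_le_sum (fun x _ => Nat.zero_le x) d hd
  rwa [l.parts_sum] at this

/-- removing one copy of part `d` gives a bijection with partitions of `N - d`. -/
def removeEquiv (N d : ℕ) (hd0 : 0 < d) (hdN : d ≤ N) :
    {l : Nat.Partition N // d ∈ l.parts} ≃ Nat.Partition (N - d) where
  toFun := fun ⟨l, h⟩ =>
    { parts := l.parts.erase d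
      parts_pos := fun hi => l.parts_pos (Multiset.mem_of_mem_erase hi)
      parts_sum := by
        have h1 : d ::ₘ l.parts.erase d = l.parts := Multiset.cons_erase h
        have h2 : d + (l.parts.erase d).sum = l.parts.sum := by
          rw [← Multiset.sum_cons, h1]
        have h3 := l.parts_sum
        have h4 := part_le_sum l h
        omega }
  invFun := fun l =>
    ⟨{ parts := d ::ₘ l.parts
       parts_pos := fun hi => by
        rcases Multiset.mem_cons.mp hi with rfl | hi
        · exact hd0
        · exact l.parts_pos hi
       parts_sum := by
        have h3 := l.parts_sum
        rw [Multiset.sum_cons, h3]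
        omega },
      Multiset.mem_cons_self d _⟩
  left_inv := fun ⟨l, h⟩ => by
    apply Subtype.ext; apply Nat.Partition.ext
    exact Multiset.cons_erase h
  right_inv := fun l => by
    apply Nat.Partition.ext
    simp [Multiset.erase_cons_head]

lemma card_contains (N d : ℕ) (hd0 : 0 < d) (hdN : d ≤ N) :
    Nat.card {l : Nat.Partition N // d ∈ l.parts} = partitionCount (N - d) := by
  rw [Nat.card_congr (removeEquiv N d hd0 hdN)]; rfl

lemma pZ_nonneg (x : ℤ) (hx : 0 ≤ x) : pZ x = partitionCount x.toNat := if_pos hx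

lemma pZ_neg (x : ℤ) (hx : x < 0) : pZ x = 0 := if_neg (by omega)

lemma a_eq (r m N : ℕ) :
    (a r m N : ℤ) =
      ∑ d ∈ Finset.range (N + 1), (if d % m = r then (d : ℤ) * pZ ((N : ℤ) - d) else 0) := by
  have key : ∀ l : Nat.Partition N,
      (∑ d ∈ l.parts.toFinset, if d % m = r then (d : ℤ) else 0)
        = ∑ d ∈ Finset.range (N + 1),
            (if d ∈ l.parts then (if d % m = r then (d : ℤ) else 0) else 0) := by
    intro l
    symm
    rw [← Finset.sum_subset (s₁ := l.parts.toFinset)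
      (fun d hd => Finset.mem_range.mpr
        (Nat.lt_succ_of_le (part_le_sum l (Multiset.mem_toFinset.mp hd))))
      (fun x _ hx => by rw [if_neg (fun hmem => hx (Multiset.mem_toFinset.mpr hmem))])]
    apply Finset.sum_congr rfl
    intro d hd
    rw [if_pos (Multiset.mem_toFinset.mp hd)]
  have step1 : (a r m N : ℤ)
      = ∑ l : Nat.Partition N, ∑ d ∈ l.parts.toFinset,
          (if d % m = r then (d : ℤ) else 0) := by
    unfold a
    push_cast
    rfl
  rw [step1]
  rw [Finset.sum_congr rfl (fun l _ => key l), Finset.sum_comm]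
  refine Finset.sum_congr rfl ?_
  intro d hd
  have hdN : d ≤ N := by simpa using Nat.lt_succ_iff.mp (Finset.mem_range.mp hd)
  by_cases hr : d % m = r
  · simp only [if_pos hr]
    rw [Finset.sum_ite, Finset.sum_const, Finset.sum_const_zero, add_zero, nsmul_eq_mul]
    rcases Nat.eq_zero_or_pos d with rfl | hd0
    · simp
    · have hcard : (Finset.univ.filter (fun l : Nat.Partition N => d ∈ l.parts)).card
          = partitionCount (N - d) := by
        rw [← card_contains N d hd0 hdN, Nat.card_eq_fintype_card, Fintype.card_subtype]
      rw [hcard]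
      have hpz : pZ ((N : ℤ) - d) = (partitionCount (N - d) : ℤ) := by
        rw [pZ, if_pos (by omega)]
        have harg : ((N : ℤ) - d).toNat = N - d := by omega
        rw [harg]
      rw [hpz]; ring
  · simp only [if_neg hr]
    simp

lemma aZ_neg (r m : ℕ) (x : ℤ) (hx : x < 0) : aZ r m x = 0 := if_neg (by omega)

lemma aZ_expand (r m : ℕ) (hm : r < m) (x : ℤ) (K : ℕ) (hK : x < K) :
    aZ r m x = ∑ j ∈ Finset.range K, ((m * j + r : ℕ) : ℤ) * pZ (x - (m * j + r : ℕ)) := by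
  rcases lt_or_ge x 0 with hx | hx
  · rw [aZ_neg r m x hx]
    symm
    apply Finset.sum_eq_zero
    intro j _
    rw [pZ_neg _ (by have : (0:ℤ) ≤ ((m * j + r : ℕ) : ℤ) := Int.natCast_nonneg _; omega),
      mul_zero]
  · set N := x.toNat with hNdef
    have hxN : x = (N : ℤ) := by omega
    have hNK : N < K := by omega
    rw [aZ, if_pos hx, a_eq r m N]
    rw [← Finset.sum_filter]
    rw [show ∑ j ∈ Finset.range K, ((m * j + r : ℕ) : ℤ) * pZ (x - (m * j + r : ℕ))
        = ∑ j ∈ (Finset.range K).filter (fun j => m * j + r ≤ N),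
            ((m * j + r : ℕ) : ℤ) * pZ (x - (m * j + r : ℕ)) from by
      symm
      apply Finset.sum_filter_of_ne
      intro j _ hne
      by_contra hle
      push_neg at hle
      rw [pZ_neg _ (by push_cast; omega), mul_zero] at hne
      exact hne rfl]
    apply Finset.sum_nbij' (i := fun d => d / m) (j := fun j => m * j + r)
    · intro d hd
      simp only [Finset.mem_filter, Finset.mem_range] at hd ⊢
      obtain ⟨hdN, hdm⟩ := hd
      have hm0 : 0 < m := by omega
      have heq : m * (d / m) + r = d := by
        conv_rhs => rw [← Nat.div_add_mod d m, hdm]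
      constructor
      · have : d / m ≤ d := Nat.div_le_self d m
        omega
      · omega
    · intro j hj
      simp only [Finset.mem_filter, Finset.mem_range] at hj ⊢
      obtain ⟨hjK, hjN⟩ := hj
      refine ⟨by omega, ?_⟩
      rw [Nat.mul_add_mod]
      exact Nat.mod_eq_of_lt hm
    · intro d hd
      simp only [Finset.mem_filter, Finset.mem_range] at hd
      conv_rhs => rw [← Nat.div_add_mod d m, hd.2]
    · intro j hj
      have hm0 : 0 < m := by omega
      rw [Nat.mul_add_div hm0, Nat.div_eq_of_lt hm, add_zero]
    · intro d hd
      simp only [Finset.mem_filter, Finset.mem_range] at hd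
      have heq : m * (d / m) + r = d := by
        conv_rhs => rw [← Nat.div_add_mod d m, hd.2]
      rw [heq, hxN]

/-! ### Dyson's map -/

def Acount (s : ℕ) (n : ℕ) : ℕ := Nat.card {l : Nat.Partition n // (s : ℤ) ≤ rank l}

def AZc (s : ℕ) (x : ℤ) : ℤ := if 0 ≤ x then Acount s x.toNat else 0

lemma sum_map_succ (t : Multiset ℕ) : (t.map (· + 1)).sum = t.sum + Multiset.card t := by
  induction t using Multiset.induction with
  | empty => simp
  | cons a s ih => simp [ih]; omega

lemma rank_def {n : ℕ} (l : Nat.Partition n) :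
    rank l = (l.parts.sup : ℤ) - Multiset.card l.parts := rfl

/-- Dyson's map, forward direction. -/
def dysonFwd (n rr : ℕ) (hr : 1 ≤ rr) (l : Nat.Partition n) : Nat.Partition (n + rr) where
  parts := (Multiset.card l.parts + rr) ::ₘ (l.parts.map (· - 1)).filter (· ≠ 0)
  parts_pos := by
    intro i hi
    rcases Multiset.mem_cons.mp hi with rfl | hi
    · omega
    · have := Multiset.of_mem_filter hi
      omega
  parts_sum := by
    rw [Multiset.sum_cons]
    have hsplit := Multiset.filter_add_not (fun x => x ≠ 0) (l.parts.map (· - 1))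
    have hzero : ((l.parts.map (· - 1)).filter (fun x => ¬ x ≠ 0)).sum = 0 := by
      apply Multiset.sum_eq_zero
      intro x hx
      have := Multiset.of_mem_filter hx
      simpa using this
    have hsum2 : ((l.parts.map (· - 1)).filter (· ≠ 0)).sum = (l.parts.map (· - 1)).sum := by
      conv_rhs => rw [← hsplit]
      rw [Multiset.sum_add, hzero, add_zero]
    have hsum3 := sum_map_pred l.parts (fun x hx => l.parts_pos hx)
    rw [l.parts_sum] at hsum3
    have hcard := card_le_sum l.parts (fun x hx => l.parts_pos hx)
    rw [l.parts_sum] at hcard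
    rw [hsum2]
    omega

lemma dysonFwd_parts (n rr : ℕ) (hr : 1 ≤ rr) (l : Nat.Partition n) :
    (dysonFwd n rr hr l).parts
      = (Multiset.card l.parts + rr) ::ₘ (l.parts.map (· - 1)).filter (· ≠ 0) := rfl

lemma dysonFwd_sup (n rr : ℕ) (hr : 1 ≤ rr) (l : Nat.Partition n)
    (h : rank l ≤ (rr : ℤ) + 1) :
    (dysonFwd n rr hr l).parts.sup = Multiset.card l.parts + rr := by
  have hsup : l.parts.sup ≤ Multiset.card l.parts + rr + 1 := by
    rw [rank_def] at h
    omega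
  show ((Multiset.card l.parts + rr) ::ₘ (l.parts.map (· - 1)).filter (· ≠ 0)).sup = _
  rw [Multiset.sup_cons]
  rw [sup_eq_left]
  rw [Multiset.sup_le]
  intro b hb
  have hb' := Multiset.mem_of_mem_filter hb
  obtain ⟨p, hp, rfl⟩ := Multiset.mem_map.mp hb'
  have : p ≤ l.parts.sup := Multiset.le_sup hp
  omega

lemma dysonFwd_card (n rr : ℕ) (hr : 1 ≤ rr) (l : Nat.Partition n) :
    Multiset.card (dysonFwd n rr hr l).parts
      = 1 + Multiset.card ((l.parts.map (· - 1)).filter (· ≠ 0)) := by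
  show Multiset.card ((Multiset.card l.parts + rr) ::ₘ _) = _
  rw [Multiset.card_cons]; omega

lemma dysonFwd_rank (n rr : ℕ) (hr : 1 ≤ rr) (l : Nat.Partition n)
    (h : rank l ≤ (rr : ℤ) + 1) : (rr : ℤ) - 1 ≤ rank (dysonFwd n rr hr l) := by
  rw [rank_def, dysonFwd_sup n rr hr l h, dysonFwd_card n rr hr l]
  have hfle : Multiset.card ((l.parts.map (· - 1)).filter (· ≠ 0))
      ≤ Multiset.card l.parts := by
    calc Multiset.card ((l.parts.map (· - 1)).filter (· ≠ 0))
        ≤ Multiset.card (l.parts.map (· - 1)) :=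
          Multiset.card_le_card (Multiset.filter_le _ _)
      _ = Multiset.card l.parts := Multiset.card_map _ _
  push_cast
  omega

/-- Dyson's map, inverse direction. -/
def dysonInv (n rr : ℕ) (hr : 1 ≤ rr) (l : Nat.Partition (n + rr))
    (h : (rr : ℤ) - 1 ≤ rank l) : Nat.Partition n where
  parts := ((l.parts.erase l.parts.sup).map (· + 1))
      + Multiset.replicate (l.parts.sup - rr - (Multiset.card l.parts - 1)) 1
  parts_pos := by
    intro i hi
    rcases Multiset.mem_add.mp hi with hi | hi
    · obtain ⟨p, _, rfl⟩ := Multiset.mem_map.mp hi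
      omega
    · have := Multiset.eq_of_mem_replicate hi
      omega
  parts_sum := by
    have hne : l.parts ≠ 0 := by
      intro h0
      have := l.parts_sum
      rw [h0] at this
      simp at this
      omega
    have hmem : l.parts.sup ∈ l.parts := sup_mem _ hne
    have hcard1 : 1 ≤ Multiset.card l.parts := Multiset.card_pos.mpr hne
    have hAn : l.parts.sup ≤ n + rr := part_le_sum l hmem
    have hrank : (rr : ℤ) - 1 ≤ (l.parts.sup : ℤ) - Multiset.card l.parts := h
    have hA : rr + (Multiset.card l.parts - 1) ≤ l.parts.sup := by omega
    have hsum_erase : (l.parts.erase l.parts.sup).sum + l.parts.sup = n + rr := by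
      have h1 : l.parts.sup ::ₘ l.parts.erase l.parts.sup = l.parts := Multiset.cons_erase hmem
      have h2 := l.parts_sum
      calc (l.parts.erase l.parts.sup).sum + l.parts.sup
          = (l.parts.sup ::ₘ l.parts.erase l.parts.sup).sum := by
            rw [Multiset.sum_cons]; omega
        _ = n + rr := by rw [h1, h2]
    have hcard_erase : Multiset.card (l.parts.erase l.parts.sup)
        = Multiset.card l.parts - 1 := by
      rw [Multiset.card_erase_of_mem hmem]; rfl
    rw [Multiset.sum_add, sum_map_succ, Multiset.sum_replicate, hcard_erase, smul_eq_mul]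
    omega

lemma dysonInv_parts (n rr : ℕ) (hr : 1 ≤ rr) (l : Nat.Partition (n + rr))
    (h : (rr : ℤ) - 1 ≤ rank l) :
    (dysonInv n rr hr l h).parts = ((l.parts.erase l.parts.sup).map (· + 1))
      + Multiset.replicate (l.parts.sup - rr - (Multiset.card l.parts - 1)) 1 := rfl

lemma dysonInv_rank (n rr : ℕ) (hr : 1 ≤ rr) (l : Nat.Partition (n + rr))
    (h : (rr : ℤ) - 1 ≤ rank l) : rank (dysonInv n rr hr l h) ≤ (rr : ℤ) + 1 := by
  have hne : l.parts ≠ 0 := by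
    intro h0
    have := l.parts_sum
    rw [h0] at this
    simp at this
    omega
  have hmem : l.parts.sup ∈ l.parts := sup_mem _ hne
  have hcard1 : 1 ≤ Multiset.card l.parts := Multiset.card_pos.mpr hne
  have hrank : (rr : ℤ) - 1 ≤ (l.parts.sup : ℤ) - Multiset.card l.parts := h
  have hA : rr + (Multiset.card l.parts - 1) ≤ l.parts.sup := by omega
  rw [rank_def, dysonInv_parts]
  have hsup : (((l.parts.erase l.parts.sup).map (· + 1))
      + Multiset.replicate (l.parts.sup - rr - (Multiset.card l.parts - 1)) 1).sup
      ≤ l.parts.sup + 1 := by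
    rw [Multiset.sup_le]
    intro b hb
    rcases Multiset.mem_add.mp hb with hb | hb
    · obtain ⟨p, hp, rfl⟩ := Multiset.mem_map.mp hb
      have : p ≤ l.parts.sup := Multiset.le_sup (Multiset.mem_of_mem_erase hp)
      omega
    · have := Multiset.eq_of_mem_replicate hb
      omega
  have hcard : Multiset.card (((l.parts.erase l.parts.sup).map (· + 1))
      + Multiset.replicate (l.parts.sup - rr - (Multiset.card l.parts - 1)) 1)
      = l.parts.sup - rr := by
    rw [Multiset.card_add, Multiset.card_map, Multiset.card_replicate,
      Multiset.card_erase_of_mem hmem]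
    simp only [Nat.pred_eq_sub_one]
    omega
  rw [hcard]
  have h1 : ((l.parts.sup - rr : ℕ) : ℤ) = (l.parts.sup : ℤ) - rr := by
    push_cast [Nat.cast_sub (by omega : rr ≤ l.parts.sup)]
    ring
  rw [h1]
  have h2 : ((((l.parts.erase l.parts.sup).map (· + 1))
      + Multiset.replicate (l.parts.sup - rr - (Multiset.card l.parts - 1)) 1).sup : ℤ)
      ≤ (l.parts.sup : ℤ) + 1 := by exact_mod_cast hsup
  omega

def dysonEquiv (n rr : ℕ) (hr : 1 ≤ rr) :
    {l : Nat.Partition n // rank l ≤ (rr : ℤ) + 1} ≃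
      {l : Nat.Partition (n + rr) // (rr : ℤ) - 1 ≤ rank l} where
  toFun := fun ⟨l, h⟩ => ⟨dysonFwd n rr hr l, dysonFwd_rank n rr hr l h⟩
  invFun := fun ⟨l, h⟩ => ⟨dysonInv n rr hr l h, dysonInv_rank n rr hr l h⟩
  left_inv := by
    rintro ⟨l, h⟩
    apply Subtype.ext
    apply Nat.Partition.ext
    rw [dysonInv_parts, dysonFwd_sup n rr hr l h, dysonFwd_parts,
      Multiset.erase_cons_head, Multiset.card_cons]
    set T := (l.parts.map (· - 1)).filter (· ≠ 0) with hT
    have hcnt : Multiset.card l.parts + rr - rr - (Multiset.card T + 1 - 1)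
        = Multiset.card l.parts - Multiset.card T := by omega
    rw [hcnt]
    have hTmap : T = (l.parts.filter (fun p => ¬ p = 1)).map (· - 1) := by
      rw [hT, Multiset.filter_map]
      congr 1
      apply Multiset.filter_congr
      intro p hp
      have hp1 := l.parts_pos hp
      simp only [Function.comp_apply, ne_eq]
      omega
    have hmap1 : T.map (· + 1) = l.parts.filter (fun p => ¬ p = 1) := by
      rw [hTmap, Multiset.map_map]
      have hc : ∀ x ∈ l.parts.filter (fun p => ¬ p = 1), ((· + 1) ∘ (· - 1)) x = id x := by
        intro x hx
        have h1 : ¬ x = 1 := (Multiset.mem_filter.mp hx).2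
        have h2 := l.parts_pos (Multiset.mem_of_mem_filter hx)
        simp only [Function.comp_apply, id_eq]
        omega
      rw [Multiset.map_congr rfl hc, Multiset.map_id]
    have hcardT : Multiset.card T = Multiset.card (l.parts.filter (fun p => ¬ p = 1)) := by
      rw [hTmap, Multiset.card_map]
    have hsplit := Multiset.filter_add_not (fun p => p = 1) l.parts
    have hcards : Multiset.card (l.parts.filter (fun p => p = 1))
        + Multiset.card (l.parts.filter (fun p => ¬ p = 1)) = Multiset.card l.parts := by
      rw [← Multiset.card_add, hsplit]
    have hrep : Multiset.replicate (Multiset.card l.parts - Multiset.card T) 1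
        = l.parts.filter (fun p => p = 1) := by
      symm
      rw [Multiset.eq_replicate]
      exact ⟨by omega, fun b hb => (Multiset.mem_filter.mp hb).2⟩
    rw [hmap1, hrep, add_comm, hsplit]
  right_inv := by
    rintro ⟨l, h⟩
    apply Subtype.ext
    apply Nat.Partition.ext
    have hne : l.parts ≠ 0 := by
      intro h0
      have := l.parts_sum
      rw [h0] at this
      simp at this
      omega
    have hmem : l.parts.sup ∈ l.parts := sup_mem _ hne
    have hcard1 : 1 ≤ Multiset.card l.parts := Multiset.card_pos.mpr hne
    have hrank : (rr : ℤ) - 1 ≤ (l.parts.sup : ℤ) - Multiset.card l.parts := h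
    have hA : rr + (Multiset.card l.parts - 1) ≤ l.parts.sup := by omega
    rw [dysonFwd_parts, dysonInv_parts]
    set k := l.parts.sup - rr - (Multiset.card l.parts - 1) with hk
    set E := l.parts.erase l.parts.sup with hE
    have hcardinv : Multiset.card (E.map (· + 1) + Multiset.replicate k 1)
        = l.parts.sup - rr := by
      rw [Multiset.card_add, Multiset.card_map, Multiset.card_replicate, hE,
        Multiset.card_erase_of_mem hmem]
      simp only [Nat.pred_eq_sub_one]
      omega
    have hmapdown : ((E.map (· + 1) + Multiset.replicate k 1).map (· - 1))
        = E + Multiset.replicate k 0 := by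
      rw [Multiset.map_add, Multiset.map_map, Multiset.map_replicate]
      congr 1
      have hc : ∀ x ∈ E, ((· - 1) ∘ (· + 1)) x = id x := by
        intro x hx
        simp
      rw [Multiset.map_congr rfl hc, Multiset.map_id]
    have hfil : ((E + Multiset.replicate k 0).filter (· ≠ 0)) = E := by
      rw [Multiset.filter_add]
      rw [Multiset.filter_eq_self.mpr (fun a ha => by
        have := l.parts_pos (Multiset.mem_of_mem_erase (hE ▸ ha))
        omega)]
      rw [Multiset.filter_eq_nil.mpr (fun a ha => by
        have := Multiset.eq_of_mem_replicate ha
        simp [this])]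
      rw [add_zero]
    rw [hcardinv, hmapdown, hfil]
    have hsup : l.parts.sup - rr + rr = l.parts.sup := by omega
    rw [hsup, hE, Multiset.cons_erase hmem]

lemma AZc_neg (s : ℕ) (x : ℤ) (hx : x < 0) : AZc s x = 0 := if_neg (by omega)

lemma Acount_eq_zero (s N : ℕ) (hs : 1 ≤ s) (hN : N ≤ s) : Acount s N = 0 := by
  have : IsEmpty {l : Nat.Partition N // (s : ℤ) ≤ rank l} := by
    constructor
    rintro ⟨l, hl⟩
    rw [rank_def] at hl
    rcases eq_or_ne l.parts 0 with h0 | h0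
    · rw [h0] at hl
      simp at hl
      omega
    · have hmem : l.parts.sup ∈ l.parts := sup_mem _ h0
      have h1 : l.parts.sup ≤ N := part_le_sum l hmem
      have h2 : 1 ≤ Multiset.card l.parts := Multiset.card_pos.mpr h0
      omega
  exact Nat.card_of_isEmpty

lemma acount_rec (s : ℕ) (hs : 1 ≤ s) (x : ℤ) :
    AZc s x = pZ (x - (s + 1)) - AZc (s + 3) (x - (s + 1)) := by
  have hxs : x - ((s : ℤ) + 1) < 0 ∨ (0 : ℤ) ≤ x - ((s : ℤ) + 1) := by omega
  rcases lt_or_ge x 0 with hx | hx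
  · rw [AZc_neg _ _ hx, pZ_neg _ (by omega), AZc_neg _ _ (by omega)]
    ring
  rcases lt_or_ge x ((s : ℤ) + 1) with hx2 | hx2
  · rw [pZ_neg _ (by omega)]
    rw [AZc_neg (s + 3) (x - ((s : ℤ) + 1)) (by omega)]
    rw [AZc, if_pos hx, Acount_eq_zero s x.toNat hs (by omega)]
    simp
  · set N := x.toNat with hNdef
    set n' := N - (s + 1) with hn'
    have hNn : N = n' + (s + 1) := by omega
    have hr1 : 1 ≤ s + 1 := by omega
    -- counting via Dyson's equivalence
    have e1 : Acount s N = Nat.card {l : Nat.Partition n' // rank l ≤ (s : ℤ) + 2} := by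
      rw [hNn]
      unfold Acount
      refine Nat.card_congr ?_
      refine Equiv.trans (Equiv.subtypeEquivRight (q := fun l : Nat.Partition (n' + (s+1)) =>
        ((s + 1 : ℕ) : ℤ) - 1 ≤ rank l) ?_) ?_
      · intro l
        push_cast
        constructor <;> intro <;> omega
      refine Equiv.trans (dysonEquiv n' (s + 1) hr1).symm ?_
      refine Equiv.subtypeEquivRight ?_
      intro l
      push_cast
      constructor <;> intro <;> omega
    have e2 : Nat.card {l : Nat.Partition n' // rank l ≤ (s : ℤ) + 2}
        = partitionCount n' - Acount (s + 3) n' := by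
      have h1 : Nat.card {l : Nat.Partition n' // rank l ≤ (s : ℤ) + 2}
          = Fintype.card {l : Nat.Partition n' // ¬ (((s + 3 : ℕ) : ℤ) ≤ rank l)} := by
        rw [Nat.card_eq_fintype_card]
        refine Fintype.card_congr (Equiv.subtypeEquivRight ?_)
        intro l
        push_cast
        constructor <;> intro <;> omega
      rw [h1, Fintype.card_subtype_compl]
      unfold Acount partitionCount
      rw [Nat.card_eq_fintype_card, Nat.card_eq_fintype_card]
    have hle : Acount (s + 3) n' ≤ partitionCount n' := by
      unfold Acount partitionCount
      rw [Nat.card_eq_fintype_card, Nat.card_eq_fintype_card]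
      exact Fintype.card_subtype_le _
    have harg : (0 : ℤ) ≤ x - ((s : ℤ) + 1) := by omega
    have harg2 : (x - ((s : ℤ) + 1)).toNat = n' := by omega
    rw [AZc, if_pos hx, ← hNdef, e1, e2]
    rw [pZ, if_pos (by omega), AZc, if_pos (by omega)]
    rw [show (x - (((s : ℤ)) + 1)).toNat = n' from by omega]
    exact Nat.cast_sub hle

lemma RZ_neg (x : ℤ) (hx : x < 0) : RZ x = 0 := if_neg (by omega)

lemma RZ_eq_AZc (x : ℤ) : RZ x = AZc 1 x := by
  unfold RZ AZc
  rcases lt_or_ge x 0 with hx | hx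
  · rw [if_neg (by omega), if_neg (by omega)]
  · rw [if_pos hx, if_pos hx]
    have hRA : R x.toNat = Acount 1 x.toNat := by
      unfold R Acount
      refine Nat.card_congr (Equiv.subtypeEquivRight ?_)
      intro l
      push_cast
      omega
    rw [hRA]

lemma telescope (x : ℤ) (K : ℕ) :
    RZ x = (∑ k ∈ Finset.range K, (-1 : ℤ) ^ k * pZ (x - gp (k + 1)))
      + (-1 : ℤ) ^ K * AZc (3 * K + 1) (x - gp K) := by
  induction K with
  | zero => simpa [gp] using RZ_eq_AZc x
  | succ K ih =>
      rw [ih, acount_rec (3 * K + 1) (by omega) (x - gp K), Finset.sum_range_succ]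
      have harg : x - (gp K : ℤ) - ((3 * K + 1 : ℕ) + 1) = x - (gp (K + 1) : ℤ) := by
        have := gp_succ K; push_cast [this]; ring
      have h2 : (3 * (K + 1) + 1) = (3 * K + 1) + 3 := by ring
      rw [harg, h2]
      ring

lemma RZ_expand (x : ℤ) (K : ℕ) (hK : x < 2 * K) :
    RZ x = ∑ k ∈ Finset.range K, (-1 : ℤ) ^ k * pZ (x - gp (k + 1)) := by
  have h := telescope x K
  have hgp : (x : ℤ) - gp K < 0 := by
    have := gp_ge K; omega
  rw [h, AZc_neg _ _ hgp, mul_zero, add_zero]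

end MercaAux

/-- Merca, Corollary 5.2(ii). -/
theorem a_pentagonal_R (m n r : ℕ) (h : r < m) :
    (∑' j : ℕ, (-1 : ℤ) ^ j * aZ r m ((n : ℤ) - ((j + 1) * (3 * (j + 1) + 1) / 2 : ℕ))) =
      ∑' j : ℕ, ((m * j + r : ℕ) : ℤ) * RZ ((n : ℤ) - (m * j + r : ℕ)) := by
  classical
  have hgp : ∀ j : ℕ, ((j + 1) * (3 * (j + 1) + 1) / 2 : ℕ) = MercaAux.gp (j + 1) :=
    fun _ => rfl
  have hL0 : ∀ k ∉ Finset.range (n + 1),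
      (-1 : ℤ) ^ k * aZ r m ((n : ℤ) - ((k + 1) * (3 * (k + 1) + 1) / 2 : ℕ)) = 0 := by
    intro k hk
    rw [Finset.mem_range, not_lt] at hk
    have h1 : 2 * (k + 1) ≤ MercaAux.gp (k + 1) := MercaAux.gp_ge (k + 1)
    rw [hgp k, MercaAux.aZ_neg r m _ (by push_cast; omega), mul_zero]
  have hR0 : ∀ j ∉ Finset.range (n + 1),
      ((m * j + r : ℕ) : ℤ) * RZ ((n : ℤ) - (m * j + r : ℕ)) = 0 := by
    intro j hj
    rw [Finset.mem_range, not_lt] at hj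
    have hj2 : j ≤ m * j := Nat.le_mul_of_pos_left j (by omega)
    rw [MercaAux.RZ_neg _ (by push_cast; omega), mul_zero]
  rw [tsum_eq_sum hL0, tsum_eq_sum hR0]
  have step : ∀ k ∈ Finset.range (n + 1),
      (-1 : ℤ) ^ k * aZ r m ((n : ℤ) - ((k + 1) * (3 * (k + 1) + 1) / 2 : ℕ))
        = ∑ j ∈ Finset.range (n + 1),
            (-1 : ℤ) ^ k * (((m * j + r : ℕ) : ℤ)
              * pZ ((n : ℤ) - ((m * j + r : ℕ) : ℤ) - ((MercaAux.gp (k + 1) : ℕ) : ℤ))) := by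
    intro k _
    rw [hgp k, MercaAux.aZ_expand r m h _ (n + 1) (by
      have h2 : (0 : ℤ) ≤ ((MercaAux.gp (k + 1) : ℕ) : ℤ) := Int.natCast_nonneg _
      push_cast at h2 ⊢
      omega), Finset.mul_sum]
    apply Finset.sum_congr rfl
    intro j _
    have harg : (n : ℤ) - ((MercaAux.gp (k + 1) : ℕ) : ℤ) - ((m * j + r : ℕ) : ℤ)
        = (n : ℤ) - ((m * j + r : ℕ) : ℤ) - ((MercaAux.gp (k + 1) : ℕ) : ℤ) := by ring
    rw [harg]
  rw [Finset.sum_congr rfl step, Finset.sum_comm]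
  apply Finset.sum_congr rfl
  intro j _
  rw [MercaAux.RZ_expand ((n : ℤ) - ((m * j + r : ℕ) : ℤ)) (n + 1) (by omega),
    Finset.mul_sum]
  apply Finset.sum_congr rfl
  intro k _
  ring
end
end

section
/- For every nonnegative integer n, Σ_{j=0}^∞ (−1)^j · p(n − j(j+1)/2) equals the number of partitions λ of n whose minimal excludant mex(λ) is odd. -/
noncomputable section

open Finset

namespace AltSumAux

def T (j : ℕ) : ℕ := j * (j + 1) / 2

lemma T_mul_two (j : ℕ) : T j * 2 = j * (j + 1) :=
  Nat.div_mul_cancel (Nat.even_mul_succ_self j).two_dvd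

lemma le_T (j : ℕ) : j ≤ T j := by
  have := T_mul_two j
  nlinarith

def I (j : ℕ) : Multiset ℕ := Multiset.map Nat.succ (Multiset.range j)

lemma mem_I {k j : ℕ} : k ∈ I j ↔ 1 ≤ k ∧ k ≤ j := by
  simp only [I, Multiset.mem_map, Multiset.mem_range]
  constructor
  · rintro ⟨a, ha, rfl⟩; omega
  · rintro ⟨h1, h2⟩; exact ⟨k - 1, by omega, by omega⟩

lemma I_nodup (j : ℕ) : (I j).Nodup :=
  (Multiset.nodup_range j).map Nat.succ_injective

lemma I_sum (j : ℕ) : (I j).sum = T j := by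
  induction j with
  | zero => simp [I, T]
  | succ j ih =>
    have h2 : T j * 2 = j * (j + 1) := T_mul_two j
    have h3 : T (j + 1) * 2 = (j + 1) * (j + 2) := T_mul_two (j + 1)
    have : (I (j+1)).sum = (j + 1) + (I j).sum := by
      simp [I, Multiset.range_succ]
    rw [this, ih]
    nlinarith

lemma part_le {n : ℕ} (l : Nat.Partition n) {k : ℕ} (hk : k ∈ l.parts) : k ≤ n := by
  have := Multiset.single_le_sum (fun x _ => Nat.zero_le x) k hk
  rwa [l.parts_sum] at this

lemma mex_mem {n : ℕ} (l : Nat.Partition n) : 0 < mex l ∧ mex l ∉ l.parts := by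
  have hne : (n + 1) ∈ {k : ℕ | 0 < k ∧ k ∉ l.parts} :=
    ⟨Nat.succ_pos n, fun h => by have := part_le l h; omega⟩
  exact Nat.sInf_mem ⟨_, hne⟩

lemma mex_le {n : ℕ} (l : Nat.Partition n) : mex l ≤ n + 1 :=
  Nat.sInf_le ⟨Nat.succ_pos n, fun h => by have := part_le l h; omega⟩

lemma lt_mex_iff {n : ℕ} (l : Nat.Partition n) (j : ℕ) :
    j < mex l ↔ ∀ k, 0 < k → k ≤ j → k ∈ l.parts := by
  constructor
  · intro h k hk hkj
    by_contra hmem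
    have : mex l ≤ k := Nat.sInf_le (⟨hk, hmem⟩ : k ∈ {k : ℕ | 0 < k ∧ k ∉ l.parts})
    omega
  · intro h
    by_contra hlt
    push_neg at hlt
    obtain ⟨hpos, hmem⟩ := mex_mem l
    exact hmem (h _ hpos hlt)

lemma I_le_parts {n : ℕ} {l : Nat.Partition n} {j : ℕ} (h : j < mex l) :
    I j ≤ l.parts := by
  rw [Multiset.le_iff_count]
  intro k
  by_cases hk : k ∈ I j
  · have h1 : (I j).count k ≤ 1 := (Multiset.nodup_iff_count_le_one.mp (I_nodup j)) k
    have hmem := mem_I.mp hk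
    have : k ∈ l.parts := (lt_mex_iff l j).mp h k (by omega) hmem.2
    have := Multiset.one_le_count_iff_mem.mpr this
    omega
  · simp [Multiset.count_eq_zero_of_notMem hk]

def equivB (n j : ℕ) (h : T j ≤ n) :
    {l : Nat.Partition n // j < mex l} ≃ Nat.Partition (n - T j) where
  toFun l := ⟨l.1.parts - I j,
    by intro i hi; exact l.1.parts_pos (Multiset.mem_of_le tsub_le_self hi),
    by
      have hle := I_le_parts l.2
      have h1 : l.1.parts - I j + I j = l.1.parts := tsub_add_cancel_of_le hle
      have h2 := congrArg Multiset.sum h1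
      rw [Multiset.sum_add, I_sum, l.1.parts_sum] at h2
      omega⟩
  invFun m := ⟨⟨m.parts + I j,
      by
        intro i hi
        rcases Multiset.mem_add.mp hi with hi | hi
        · exact m.parts_pos hi
        · have := mem_I.mp hi; omega,
      by rw [Multiset.sum_add, I_sum, m.parts_sum]; omega⟩,
    by
      rw [lt_mex_iff]
      intro k hk hkj
      exact Multiset.mem_add.mpr (Or.inr (mem_I.mpr ⟨hk, hkj⟩))⟩
  left_inv l := by
    apply Subtype.ext
    apply Nat.Partition.ext
    exact tsub_add_cancel_of_le (I_le_parts l.2)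
  right_inv m := by
    apply Nat.Partition.ext
    exact add_tsub_cancel_right _ _

lemma pZ_eq (n j : ℕ) :
    pZ ((n : ℤ) - T j) = (Nat.card {l : Nat.Partition n // j < mex l} : ℤ) := by
  by_cases h : T j ≤ n
  · rw [pZ, if_pos (by omega)]
    have h1 : ((n : ℤ) - T j).toNat = n - T j := by omega
    rw [h1, partitionCount, Nat.card_congr (equivB n j h)]
  · rw [pZ, if_neg (by omega)]
    have : IsEmpty {l : Nat.Partition n // j < mex l} := by
      constructor
      rintro ⟨l, hl⟩
      have hle := I_le_parts hl
      have h1 := congrArg Multiset.sum (tsub_add_cancel_of_le hle)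
      rw [Multiset.sum_add, I_sum, l.parts_sum] at h1
      omega
    rw [Nat.card_of_isEmpty]
    simp

lemma neg_one_sum (m : ℕ) :
    ∑ j ∈ range m, (-1 : ℤ) ^ j = if Odd m then 1 else 0 := by
  induction m with
  | zero => simp
  | succ m ih =>
    rw [sum_range_succ, ih]
    rcases Nat.even_or_odd m with he | ho
    · simp [he.neg_one_pow, Nat.not_odd_iff_even.mpr he, Nat.odd_add_one,
        ← Nat.not_odd_iff_even]
    · simp [ho.neg_one_pow, ho, Nat.odd_add_one, Nat.not_even_iff_odd.mpr ho]

end AltSumAux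

open AltSumAux

/-- `Σ_{j≥0} (-1)^j p(n - j(j+1)/2)` equals the number of partitions of `n`
with odd minimal excludant. -/
theorem alt_sum_eq_odd_mex (n : ℕ) :
    (∑' j : ℕ, (-1 : ℤ) ^ j * pZ ((n : ℤ) - (j * (j + 1) / 2 : ℕ))) =
      (Nat.card {l : Nat.Partition n // Odd (mex l)} : ℤ) := by
  classical
  have hzero : ∀ j ∉ range (n + 1),
      (-1 : ℤ) ^ j * pZ ((n : ℤ) - (j * (j + 1) / 2 : ℕ)) = 0 := by
    intro j hj
    rw [mem_range] at hj
    have hT : n < T j := lt_of_lt_of_le (by omega) (le_T j)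
    have : pZ ((n : ℤ) - (j * (j + 1) / 2 : ℕ)) = 0 := by
      rw [show (j * (j + 1) / 2 : ℕ) = T j from rfl, pZ, if_neg (by omega)]
    rw [this, mul_zero]
  rw [tsum_eq_sum hzero]
  have hcard : ∀ (p : Nat.Partition n → Prop) [DecidablePred p],
      (Nat.card {l : Nat.Partition n // p l} : ℤ)
        = ∑ l : Nat.Partition n, if p l then (1 : ℤ) else 0 := by
    intro p _
    rw [Nat.card_eq_fintype_card, Fintype.card_subtype, Finset.card_filter]
    push_cast
    rfl
  calc ∑ j ∈ range (n + 1), (-1 : ℤ) ^ j * pZ ((n : ℤ) - (j * (j + 1) / 2 : ℕ))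
      = ∑ j ∈ range (n + 1), ∑ l : Nat.Partition n,
          (if j < mex l then (-1 : ℤ) ^ j else 0) := by
        refine Finset.sum_congr rfl fun j _ => ?_
        rw [show (j * (j + 1) / 2 : ℕ) = T j from rfl, pZ_eq n j, hcard, mul_sum]
        refine Finset.sum_congr rfl fun l _ => ?_
        split <;> simp
    _ = ∑ l : Nat.Partition n, ∑ j ∈ range (n + 1),
          (if j < mex l then (-1 : ℤ) ^ j else 0) := Finset.sum_comm
    _ = ∑ l : Nat.Partition n, if Odd (mex l) then (1 : ℤ) else 0 := by
        refine Finset.sum_congr rfl fun l _ => ?_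
        rw [← neg_one_sum (mex l)]
        rw [← Finset.sum_subset (Finset.range_subset_range.mpr (mex_le l))
          (fun x _ hx => by rw [if_neg (by simpa using fun h => hx (mem_range.mpr h))])]
        exact Finset.sum_congr rfl fun j hj => if_pos (mem_range.mp hj)
    _ = (Nat.card {l : Nat.Partition n // Odd (mex l)} : ℤ) := (hcard _).symm
end
end
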